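/- For angles α₁, α₂, α₃, α₄ each in (-π, π) with α₁ + α₂ + α₃ + α₄ = 2π, and tᵢ = tan(αᵢ/2), the quantity q := t₁t₂ + t₁t₃ + t₂t₃ - 1 is positive and t₄ = (t₁ + t₂ + t₃ - t₁t₂t₃)/q. -/

import Mathlib

open Real

/-- Four-angle half-angle tangent identity: for angles `αᵢ ∈ (-π, π)` summing to `2π`,
with `tᵢ = tan (αᵢ/2)`, the quantity `q = t₁t₂ + t₁t₃ + t₂t₃ - 1` is positive and
`t₄ = (t₁ + t₂ + t₃ - t₁t₂t₃) / q`. -/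
theorem stmt0 (α : Fin 4 → ℝ) (hα : ∀ i, α i ∈ Set.Ioo (-π) π)
    (hsum : α 0 + α 1 + α 2 + α 3 = 2 * π)
    (t : Fin 4 → ℝ) (ht : ∀ i, t i = Real.tan (α i / 2)) :
    0 < t 0 * t 1 + t 0 * t 2 + t 1 * t 2 - 1 ∧
      t 3 = (t 0 + t 1 + t 2 - t 0 * t 1 * t 2) /
        (t 0 * t 1 + t 0 * t 2 + t 1 * t 2 - 1) := by
  have hcpos : ∀ i, 0 < Real.cos (α i / 2) := by
    intro i
    apply Real.cos_pos_of_mem_Ioo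
    constructor
    · linarith [(hα i).1]
    · linarith [(hα i).2]
  have hsin : ∀ i, Real.sin (α i / 2) = t i * Real.cos (α i / 2) := by
    intro i
    rw [ht i]
    exact (Real.tan_mul_cos (ne_of_gt (hcpos i))).symm
  set C := Real.cos (α 0 / 2) * Real.cos (α 1 / 2) * Real.cos (α 2 / 2) with hC
  have hCpos : 0 < C := by
    have := hcpos 0; have := hcpos 1; have := hcpos 2
    positivity
  have hs : α 0 / 2 + α 1 / 2 + α 2 / 2 = π - α 3 / 2 := by linarith
  have hcos : Real.cos (α 3 / 2) =
      C * (t 0 * t 1 + t 0 * t 2 + t 1 * t 2 - 1) := by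
    have h1 : Real.cos (π - α 3 / 2) = - Real.cos (α 3 / 2) := Real.cos_pi_sub _
    rw [← hs, Real.cos_add, Real.cos_add, Real.sin_add, hsin 0, hsin 1, hsin 2] at h1
    rw [hC]
    linarith [h1]
  have hsin3 : Real.sin (α 3 / 2) =
      C * (t 0 + t 1 + t 2 - t 0 * t 1 * t 2) := by
    have h1 : Real.sin (π - α 3 / 2) = Real.sin (α 3 / 2) := Real.sin_pi_sub _
    rw [← hs, Real.sin_add, Real.sin_add, Real.cos_add, hsin 0, hsin 1, hsin 2] at h1
    rw [hC]
    linarith [h1]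
  have hqpos : 0 < t 0 * t 1 + t 0 * t 2 + t 1 * t 2 - 1 := by
    by_contra h
    push_neg at h
    have : Real.cos (α 3 / 2) ≤ 0 := by
      rw [hcos]
      exact mul_nonpos_of_nonneg_of_nonpos hCpos.le h
    linarith [hcpos 3]
  refine ⟨hqpos, ?_⟩
  have h3 := hsin 3
  rw [hsin3, hcos] at h3
  have : t 3 * (t 0 * t 1 + t 0 * t 2 + t 1 * t 2 - 1) =
      t 0 + t 1 + t 2 - t 0 * t 1 * t 2 := by
    have hC0 : C ≠ 0 := hCpos.ne'
    apply mul_left_cancel₀ hC0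
    linear_combination -h3
  field_simp
  rw [eq_div_iff]
  · linarith [this]
  · exact ne_of_gt (by linarith [hqpos])
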